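/- arXiv:0707.3248 — 3 statements merged into one kernel-verified Lean document; each statement's English description precedes it below -/
import Mathlib

section
/- Let L ≥ 1, σ_l > 0, h_l > 0 for l = 1,…,L, and fix a > 0. Consider minimizing Σ_{l=1}^L σ_l² h_l² α_l² subject to 0 ≤ α_l ≤ α_max,l and Σ_l h_l α_l = a, where the indices are ordered so that σ_1² h_1 α_max,1 ≤ … ≤ σ_L² h_L α_max,L. Suppose a ∈ [a_k, a_{k+1}] where a_k = Σ_{l≤k} h_l α_max,l + σ_k² h_k α_max,k Σ_{l>k} σ_l^{-2} (with a_0 = 0). Then the choice α_l = α_max,l for l ≤ k and α_l = (1/(σ_l² h_l)) · (a − Σ_{m≤k} h_m α_max,m)/(Σ_{m>k} σ_m^{-2}) for l > k is feasible and achieves the minimum value V(a) = Σ_{l≤k} σ_l² h_l² α_max,l² + (a − Σ_{l≤k} h_l α_max,l)² / (Σ_{l>k} σ_l^{-2}). -/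
open Finset

/-- water-filling solution of the box-constrained problem
minimize Σ σ_l²h_l²α_l² s.t. 0 ≤ α_l ≤ α_max,l and Σ h_lα_l = a, for
a ∈ [a_k, a_{k+1}] (sensors ordered by σ_l²h_lα_max,l). -/
theorem stmt_4 (L : ℕ) (hL : 1 ≤ L) (σ h αmax : Fin L → ℝ)
    (hσ : ∀ l, 0 < σ l) (hh : ∀ l, 0 < h l) (hαmax : ∀ l, 0 < αmax l)
    (horder : ∀ i j : Fin L, i ≤ j →
      (σ i)^2 * h i * αmax i ≤ (σ j)^2 * h j * αmax j)
    (a : ℝ) (ha : 0 < a) (k : ℕ) (hk : k < L)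
    (A : ℕ → ℝ)
    (hA : ∀ m : ℕ, ∀ hm : m ≤ L, A m = if hm0 : m = 0 then 0 else
      (∑ l ∈ Finset.univ.filter (fun l : Fin L => l.val < m), h l * αmax l) +
      (σ ⟨m - 1, by omega⟩)^2 * h ⟨m - 1, by omega⟩ * αmax ⟨m - 1, by omega⟩ *
        ∑ l ∈ Finset.univ.filter (fun l : Fin L => m ≤ l.val), ((σ l)^2)⁻¹)
    (halo : A k ≤ a) (hahi : a ≤ A (k + 1))
    (αopt : Fin L → ℝ)
    (hαopt : ∀ l : Fin L, αopt l = if l.val < k then αmax l else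
      (1 / ((σ l)^2 * h l)) *
        ((a - ∑ m ∈ Finset.univ.filter (fun m : Fin L => m.val < k), h m * αmax m) /
          ∑ m ∈ Finset.univ.filter (fun m : Fin L => k ≤ m.val), ((σ m)^2)⁻¹)) :
    (∀ l, 0 ≤ αopt l ∧ αopt l ≤ αmax l) ∧
    (∑ l, h l * αopt l = a) ∧
    (∑ l, (σ l)^2 * (h l)^2 * (αopt l)^2 =
      (∑ l ∈ Finset.univ.filter (fun l : Fin L => l.val < k),
          (σ l)^2 * (h l)^2 * (αmax l)^2) +
        (a - ∑ l ∈ Finset.univ.filter (fun l : Fin L => l.val < k), h l * αmax l)^2 /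
          ∑ l ∈ Finset.univ.filter (fun l : Fin L => k ≤ l.val), ((σ l)^2)⁻¹) ∧
    (∀ α : Fin L → ℝ, (∀ l, 0 ≤ α l ∧ α l ≤ αmax l) → ∑ l, h l * α l = a →
      ∑ l, (σ l)^2 * (h l)^2 * (αopt l)^2 ≤ ∑ l, (σ l)^2 * (h l)^2 * (α l)^2) := by
  set S1 : Finset (Fin L) := Finset.univ.filter (fun l : Fin L => l.val < k) with hS1
  set S2 : Finset (Fin L) := Finset.univ.filter (fun l : Fin L => k ≤ l.val) with hS2
  set B : ℝ := ∑ l ∈ S1, h l * αmax l with hB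
  set T : ℝ := ∑ l ∈ S2, ((σ l)^2)⁻¹ with hT
  set c : ℝ := (a - B) / T with hc
  have hkm : (⟨k, hk⟩ : Fin L) ∈ S2 := by simp [hS2]
  have hT0 : 0 < T := Finset.sum_pos (fun l _ => by have := hσ l; positivity) ⟨_, hkm⟩
  set N : ℝ := (σ ⟨k, hk⟩)^2 * h ⟨k, hk⟩ * αmax ⟨k, hk⟩ with hN
  -- splitting lemmas for the A(k+1) sums
  have hsplit1 : Finset.univ.filter (fun l : Fin L => l.val < k + 1)
      = insert (⟨k, hk⟩ : Fin L) S1 := by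
    ext l
    simp only [Finset.mem_filter, Finset.mem_univ, true_and, Finset.mem_insert, hS1,
      Fin.ext_iff]
    omega
  have hsplit2 : S2 = insert (⟨k, hk⟩ : Fin L)
      (Finset.univ.filter (fun l : Fin L => k + 1 ≤ l.val)) := by
    ext l
    simp only [Finset.mem_filter, Finset.mem_univ, true_and, Finset.mem_insert, hS2,
      Fin.ext_iff]
    omega
  have hnm1 : (⟨k, hk⟩ : Fin L) ∉ S1 := by simp [hS1]
  have hnm2 : (⟨k, hk⟩ : Fin L) ∉ Finset.univ.filter (fun l : Fin L => k + 1 ≤ l.val) := by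
    simp
  have hAk1 : A (k + 1) = (B + h ⟨k, hk⟩ * αmax ⟨k, hk⟩) + N * (T - ((σ ⟨k, hk⟩)^2)⁻¹) := by
    rw [hA (k + 1) (by omega), dif_neg (Nat.succ_ne_zero k)]
    have hidx : (⟨k + 1 - 1, by omega⟩ : Fin L) = ⟨k, hk⟩ := rfl
    rw [hidx, hsplit1, Finset.sum_insert hnm1]
    have hTsplit : T = ((σ ⟨k, hk⟩)^2)⁻¹
        + ∑ l ∈ Finset.univ.filter (fun l : Fin L => k + 1 ≤ l.val), ((σ l)^2)⁻¹ := by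
      rw [hT, hsplit2, Finset.sum_insert hnm2]
    rw [show (∑ l ∈ Finset.univ.filter (fun l : Fin L => k + 1 ≤ l.val), ((σ l)^2)⁻¹)
        = T - ((σ ⟨k, hk⟩)^2)⁻¹ by rw [hTsplit]; ring]
    ring
  have hσk0 : (σ ⟨k, hk⟩)^2 ≠ 0 := by have := hσ ⟨k, hk⟩; positivity
  have hNσ : N * ((σ ⟨k, hk⟩)^2)⁻¹ = h ⟨k, hk⟩ * αmax ⟨k, hk⟩ := by
    rw [hN, mul_inv_eq_iff_eq_mul₀ hσk0]; ring
  have hub : a - B ≤ N * T := by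
    have := hahi
    rw [hAk1] at this
    nlinarith [hNσ]
  have hcN : c ≤ N := by
    rw [hc, div_le_iff₀ hT0]; linarith
  -- lower bounds
  have hlow : 0 ≤ c ∧ ∀ l ∈ S1, (σ l)^2 * h l * αmax l ≤ c := by
    rcases Nat.eq_zero_or_pos k with hk0 | hk0
    · have hS1e : S1 = ∅ := by
        ext l; simp [hS1, hk0]
      have hB0 : B = 0 := by rw [hB, hS1e, Finset.sum_empty]
      constructor
      · rw [hc, hB0]
        apply div_nonneg (by linarith) hT0.le
      · intro l hl; rw [hS1e] at hl; exact absurd hl (Finset.notMem_empty l)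
    · have hk1L : k - 1 < L := by omega
      set M : ℝ := (σ ⟨k - 1, hk1L⟩)^2 * h ⟨k - 1, hk1L⟩ * αmax ⟨k - 1, hk1L⟩ with hM
      have hAk : A k = B + M * T := by
        rw [hA k (by omega), dif_neg (by omega)]
      have hMc : M ≤ c := by
        rw [hc, le_div_iff₀ hT0]
        rw [hAk] at halo
        linarith
      have hM0 : 0 ≤ M := by
        have := hσ ⟨k - 1, hk1L⟩; have := hh ⟨k - 1, hk1L⟩; have := hαmax ⟨k - 1, hk1L⟩
        rw [hM]; positivity
      refine ⟨le_trans hM0 hMc, fun l hl => ?_⟩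
      have hlk : l.val < k := by
        rw [hS1] at hl; simpa using hl
      have hle : l ≤ (⟨k - 1, hk1L⟩ : Fin L) := by
        rw [Fin.le_def]; simp; omega
      exact le_trans (horder l ⟨k - 1, hk1L⟩ hle) hMc
  obtain ⟨hc0, hS1le⟩ := hlow
  have hS2ge : ∀ l : Fin L, k ≤ l.val → c ≤ (σ l)^2 * h l * αmax l := by
    intro l hl
    refine le_trans hcN (horder ⟨k, hk⟩ l ?_)
    rw [Fin.le_def]; simpa using hl
  -- values of αopt on S2
  have hαopt2 : ∀ l : Fin L, ¬ l.val < k → αopt l = 1 / ((σ l)^2 * h l) * c := by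
    intro l hl
    rw [hαopt l, if_neg hl]
  -- feasibility
  have hfeas : ∀ l, 0 ≤ αopt l ∧ αopt l ≤ αmax l := by
    intro l
    by_cases hl : l.val < k
    · rw [hαopt l, if_pos hl]
      exact ⟨(hαmax l).le, le_refl _⟩
    · rw [hαopt2 l hl]
      have hσl := hσ l; have hhl := hh l
      constructor
      · positivity
      · rw [one_div, inv_mul_le_iff₀ (by positivity)]
        have := hS2ge l (by omega)
        nlinarith
  -- splitting of total sums
  have hcompl : ∀ f : Fin L → ℝ, ∑ l, f l = ∑ l ∈ S1, f l + ∑ l ∈ S2, f l := by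
    intro f
    rw [← Finset.sum_filter_add_sum_filter_not Finset.univ (fun l : Fin L => l.val < k) f]
    congr 1
    apply Finset.sum_congr _ (fun _ _ => rfl)
    ext l; simp [hS2, not_lt]
  -- the equality constraint
  have hsum2 : ∑ l ∈ S2, h l * αopt l = c * T := by
    rw [hT, Finset.mul_sum]
    apply Finset.sum_congr rfl
    intro l hl
    have hlk : ¬ l.val < k := by
      rw [hS2] at hl; simp at hl; omega
    rw [hαopt2 l hlk]
    have hσl := hσ l; have hhl := hh l
    field_simp
  have hsum1 : ∑ l ∈ S1, h l * αopt l = B := by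
    rw [hB]
    apply Finset.sum_congr rfl
    intro l hl
    have hlk : l.val < k := by rw [hS1] at hl; simpa using hl
    rw [hαopt l, if_pos hlk]
  have hcT : c * T = a - B := by
    rw [hc, div_mul_cancel₀ _ (ne_of_gt hT0)]
  have hconstr : ∑ l, h l * αopt l = a := by
    rw [hcompl, hsum1, hsum2, hcT]; ring
  -- the value
  have hval : ∑ l, (σ l)^2 * (h l)^2 * (αopt l)^2
      = (∑ l ∈ S1, (σ l)^2 * (h l)^2 * (αmax l)^2) + (a - B)^2 / T := by
    rw [hcompl]
    congr 1
    · apply Finset.sum_congr rfl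
      intro l hl
      have hlk : l.val < k := by rw [hS1] at hl; simpa using hl
      rw [hαopt l, if_pos hlk]
    · have : ∑ l ∈ S2, (σ l)^2 * (h l)^2 * (αopt l)^2 = c^2 * T := by
        rw [hT, Finset.mul_sum]
        apply Finset.sum_congr rfl
        intro l hl
        have hlk : ¬ l.val < k := by rw [hS2] at hl; simp at hl; omega
        rw [hαopt2 l hlk]
        have hσl := hσ l; have hhl := hh l
        field_simp
      rw [this, hc, div_pow, div_mul_eq_mul_div, sq T, ← div_div,
        mul_div_assoc, div_self (ne_of_gt hT0), mul_one]
  refine ⟨hfeas, hconstr, hval, ?_⟩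
  -- optimality
  intro α hα hαa
  have hkey : ∀ l : Fin L, c * (h l * (α l - αopt l))
      ≤ (σ l)^2 * (h l)^2 * αopt l * (α l - αopt l) := by
    intro l
    by_cases hl : l.val < k
    · have hopt : αopt l = αmax l := by rw [hαopt l, if_pos hl]
      have ht : h l * (α l - αopt l) ≤ 0 := by
        have := (hα l).2
        have := hh l
        rw [hopt]; nlinarith
      have hx : (σ l)^2 * h l * αmax l ≤ c := hS1le l (by rw [hS1]; simpa using hl)
      calc c * (h l * (α l - αopt l))
          ≤ ((σ l)^2 * h l * αmax l) * (h l * (α l - αopt l)) :=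
            mul_le_mul_of_nonpos_right hx ht
        _ = (σ l)^2 * (h l)^2 * αopt l * (α l - αopt l) := by rw [hopt]; ring
    · have hopt := hαopt2 l hl
      have hσl := hσ l; have hhl := hh l
      have : (σ l)^2 * (h l)^2 * αopt l = c * h l := by
        rw [hopt]; field_simp
      rw [this]
      exact le_of_eq (by ring)
  have hzero : (0:ℝ) ≤ ∑ l, (σ l)^2 * (h l)^2 * αopt l * (α l - αopt l) := by
    have h1 : ∑ l, c * (h l * (α l - αopt l))
        ≤ ∑ l, (σ l)^2 * (h l)^2 * αopt l * (α l - αopt l) :=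
      Finset.sum_le_sum (fun l _ => hkey l)
    have h2 : ∑ l, c * (h l * (α l - αopt l)) = 0 := by
      have : ∑ l, c * (h l * (α l - αopt l))
          = c * (∑ l, h l * α l - ∑ l, h l * αopt l) := by
        rw [← Finset.sum_sub_distrib, Finset.mul_sum]
        apply Finset.sum_congr rfl
        intro l _
        ring
      rw [this, hαa, hconstr]; ring
    linarith
  have hsq : (0:ℝ) ≤ ∑ l, (σ l)^2 * (h l)^2 * (α l - αopt l)^2 :=
    Finset.sum_nonneg (fun l _ => by have := hσ l; have := hh l; positivity)
  have hid : ∑ l, (σ l)^2 * (h l)^2 * (α l)^2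
      = ∑ l, (σ l)^2 * (h l)^2 * (αopt l)^2
        + 2 * ∑ l, (σ l)^2 * (h l)^2 * αopt l * (α l - αopt l)
        + ∑ l, (σ l)^2 * (h l)^2 * (α l - αopt l)^2 := by
    rw [Finset.mul_sum, ← Finset.sum_add_distrib, ← Finset.sum_add_distrib]
    apply Finset.sum_congr rfl
    intro l _
    ring
  linarith
end

section
/- Suppose σ_l = σ, h_l = h, P_l = P, and α_max,l = α_max for all l = 1,…,L (symmetric case). Then the function f(α) = (Σ_l (σ h α_l)² + σ_MAC²)/(Σ_l h α_l)² over the box 0 ≤ α_l ≤ α_max (excluding α = 0) is minimized at α_l = α_max for all l, with minimum value (L σ² h² α_max² + σ_MAC²)/(L h α_max)². -/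
open Finset

/-- symmetric case: with identical sensors, f(α) =
(Σ(σhα_l)² + σ_MAC²)/(Σ hα_l)² over the box 0 ≤ α_l ≤ α_max (excluding α = 0)
is minimized at α_l = α_max for all l, with value (Lσ²h²α_max² + σ_MAC²)/(Lhα_max)². -/
theorem stmt_8 (L : ℕ) (hL : 1 ≤ L) (σ h αmax σMAC : ℝ)
    (hσ : 0 < σ) (hh : 0 < h) (hαmax : 0 < αmax) (hσMAC : 0 < σMAC)
    (f : (Fin L → ℝ) → ℝ)
    (hf : ∀ α, f α = (∑ l : Fin L, (σ * h * α l)^2 + σMAC^2) / (∑ l : Fin L, h * α l)^2) :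
    f (fun _ => αmax) = (L * σ^2 * h^2 * αmax^2 + σMAC^2) / (L * h * αmax)^2 ∧
    ∀ α : Fin L → ℝ, (∀ l, 0 ≤ α l ∧ α l ≤ αmax) → α ≠ 0 →
      f (fun _ => αmax) ≤ f α := by
  have hLpos : (0:ℝ) < L := by exact_mod_cast hL
  have hval : f (fun _ => αmax) = (L * σ^2 * h^2 * αmax^2 + σMAC^2) / (L * h * αmax)^2 := by
    rw [hf]
    simp only [Finset.sum_const, Finset.card_univ, Fintype.card_fin, nsmul_eq_mul]
    ring_nf
  refine ⟨hval, ?_⟩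
  intro α hbox hne
  set s := ∑ l : Fin L, h * α l with hs
  set T := ∑ l : Fin L, (h * α l)^2 with hT
  have hαnn : ∀ l, 0 ≤ α l := fun l => (hbox l).1
  have hspos : 0 < s := by
    obtain ⟨l, hl⟩ : ∃ l, α l ≠ 0 := by
      by_contra hc; push_neg at hc; exact hne (funext fun l => hc l)
    exact Finset.sum_pos' (fun i _ => mul_nonneg hh.le (hαnn i))
      ⟨l, Finset.mem_univ l, mul_pos hh (lt_of_le_of_ne (hαnn l) (Ne.symm hl))⟩
  have hsle : s ≤ L * h * αmax := by
    calc s ≤ ∑ _l : Fin L, h * αmax :=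
          Finset.sum_le_sum (fun i _ => by
            exact mul_le_mul_of_nonneg_left (hbox i).2 hh.le)
      _ = L * h * αmax := by
          simp [Finset.sum_const, Finset.card_univ, mul_assoc]
  have hcauchy : s^2 ≤ L * T := by
    have := sq_sum_le_card_mul_sum_sq (s := (Finset.univ : Finset (Fin L)))
      (f := fun l => h * α l)
    simpa using this
  have hTnn : 0 ≤ T := Finset.sum_nonneg (fun i _ => sq_nonneg _)
  have hsum : (∑ l : Fin L, (σ * h * α l)^2) = σ^2 * T := by
    rw [Finset.mul_sum]; apply Finset.sum_congr rfl; intro l _; ring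
  rw [hval, hf, hsum, ← hs]
  rw [div_le_div_iff₀ (by positivity) (by positivity)]
  nlinarith [sq_nonneg s, mul_pos hspos hspos, sq_nonneg (σ*αmax*h),
    mul_le_mul hsle hsle hspos.le (by positivity : (0:ℝ) ≤ (L:ℝ)*h*αmax),
    mul_le_mul_of_nonneg_left hcauchy (by positivity : (0:ℝ) ≤ σ^2*h^2*αmax^2),
    mul_le_mul_of_nonneg_left
      (mul_le_mul hsle hsle hspos.le (by positivity : (0:ℝ) ≤ (L:ℝ)*h*αmax))
      (sq_nonneg σMAC)]
end

section
/- Fix σ > 0 and σ' > σ, and m₀ ≠ m₁. Let f_{i,σ} denote the density of N(m_i, σ²). Then for any convex C : (0,∞) → ℝ (with the relevant integrals finite), ∫ f_{0,σ'}(y) C(f_{1,σ'}(y)/f_{0,σ'}(y)) dy ≤ ∫ f_{0,σ}(y) C(f_{1,σ}(y)/f_{0,σ}(y)) dy. That is, increasing the common Gaussian noise variance cannot increase any Ali-Silvey (f-)divergence between the two hypotheses. -/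
open Real

section St16Aux

noncomputable def st16phi (x : ℝ) : ℝ := (Real.sqrt (2 * π))⁻¹ * Real.exp (-x ^ 2 / 2)

lemma st16phi_nonneg (x : ℝ) : 0 ≤ st16phi x := by
  unfold st16phi
  positivity

lemma st16phi_cont : Continuous st16phi := by
  unfold st16phi
  fun_prop

open MeasureTheory in
lemma st16_exp_integrable (a : ℝ) : Integrable (fun x => st16phi x * Real.exp (a * x)) := by
  have h : ∀ x : ℝ, st16phi x * Real.exp (a * x)
      = ((Real.sqrt (2 * π))⁻¹ * Real.exp (a ^ 2 / 2)) * Real.exp (-(1/2) * (x - a) ^ 2) := by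
    intro x
    unfold st16phi
    rw [mul_assoc, mul_assoc, ← Real.exp_add, ← Real.exp_add]
    ring_nf
  simp_rw [h]
  exact ((integrable_exp_neg_mul_sq (by norm_num : (0:ℝ) < 1/2)).comp_sub_right a).const_mul _

open MeasureTheory in
lemma st16_exp_integral (a : ℝ) : ∫ x : ℝ, st16phi x * Real.exp (a * x) = Real.exp (a ^ 2 / 2) := by
  have h : ∀ x : ℝ, st16phi x * Real.exp (a * x)
      = ((Real.sqrt (2 * π))⁻¹ * Real.exp (a ^ 2 / 2)) * Real.exp (-(1/2) * (x - a) ^ 2) := by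
    intro x
    unfold st16phi
    rw [mul_assoc, mul_assoc, ← Real.exp_add, ← Real.exp_add]
    ring_nf
  simp_rw [h]
  rw [MeasureTheory.integral_const_mul,
    integral_sub_right_eq_self (fun x => Real.exp (-(1/2) * x ^ 2)) a,
    integral_gaussian]
  have h2 : Real.sqrt (π / (1/2)) = Real.sqrt (2 * π) := by
    norm_num [mul_comm]
  rw [h2, mul_comm ((Real.sqrt (2*π))⁻¹) _, mul_assoc, inv_mul_cancel₀ (by positivity), mul_one]

open MeasureTheory in
lemma st16K_integrable {b : ℝ} (hb : 0 < b) (c a : ℝ) :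
    Integrable (fun u : ℝ => b⁻¹ * st16phi ((u - c) / b) * Real.exp (a * u)) := by
  have h : ∀ u : ℝ, b⁻¹ * st16phi ((u - c) / b) * Real.exp (a * u)
      = (b⁻¹ * Real.exp (a * c)) *
        ((fun x => st16phi (x / b) * Real.exp (a * b * (x / b))) (u - c)) := by
    intro u
    have h2 : a * b * ((u - c) / b) = a * (u - c) := by field_simp
    have h3 : Real.exp (a * c) * Real.exp (a * (u - c)) = Real.exp (a * u) := by
      rw [← Real.exp_add]; congr 1; ring
    simp only []
    rw [h2, ← h3]; ring
  simp_rw [h]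
  refine Integrable.const_mul ?_ _
  exact ((st16_exp_integrable (a * b)).comp_div hb.ne').comp_sub_right c

open MeasureTheory in
lemma st16K_integral {b : ℝ} (hb : 0 < b) (c a : ℝ) :
    ∫ u : ℝ, b⁻¹ * st16phi ((u - c) / b) * Real.exp (a * u)
      = Real.exp (a * c + a ^ 2 * b ^ 2 / 2) := by
  have h : ∀ u : ℝ, b⁻¹ * st16phi ((u - c) / b) * Real.exp (a * u)
      = (b⁻¹ * Real.exp (a * c)) *
        ((fun x => st16phi (x / b) * Real.exp (a * b * (x / b))) (u - c)) := by
    intro u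
    have h2 : a * b * ((u - c) / b) = a * (u - c) := by field_simp
    have h3 : Real.exp (a * c) * Real.exp (a * (u - c)) = Real.exp (a * u) := by
      rw [← Real.exp_add]; congr 1; ring
    simp only []
    rw [h2, ← h3]; ring
  simp_rw [h]
  rw [MeasureTheory.integral_const_mul,
    integral_sub_right_eq_self (fun x => st16phi (x / b) * Real.exp (a * b * (x / b))) c,
    MeasureTheory.Measure.integral_comp_div (fun y => st16phi y * Real.exp (a * b * y)) b,
    st16_exp_integral]
  rw [abs_of_pos hb, smul_eq_mul]
  have h3 : b⁻¹ * Real.exp (a * c) * (b * Real.exp ((a * b) ^ 2 / 2))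
      = Real.exp (a * c) * Real.exp ((a * b) ^ 2 / 2) := by
    field_simp
  rw [h3, ← Real.exp_add]
  congr 1
  ring

lemma st16_supporting {C : ℝ → ℝ} (hC : ConvexOn ℝ (Set.Ioi (0:ℝ)) C) {p : ℝ} (hp : 0 < p) :
    ∃ k : ℝ, ∀ x ∈ Set.Ioi (0:ℝ), C p + k * (x - p) ≤ C x := by
  set S : Set ℝ := (fun y => (C y - C p) / (y - p)) '' Set.Ioi p with hS
  have hne : S.Nonempty := ⟨_, ⟨p + 1, by simp only [Set.mem_Ioi]; linarith, rfl⟩⟩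
  have hmem : ∀ x ∈ Set.Ioi (0:ℝ), x < p → ∀ s ∈ S, (C p - C x) / (p - x) ≤ s := by
    intro x hx hxp s hs
    obtain ⟨y, hy, rfl⟩ := hs
    have := hC.slope_mono_adjacent hx (show y ∈ Set.Ioi (0:ℝ) from lt_trans hp hy) hxp hy
    simpa [slope_def_field, div_eq_div_iff] using this
  have hbdd : BddBelow S := by
    refine ⟨(C p - C (p/2)) / (p - p/2), fun s hs => ?_⟩
    exact hmem (p/2) (by simp only [Set.mem_Ioi]; linarith) (by linarith) s hs
  refine ⟨sInf S, fun x hx => ?_⟩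
  rcases lt_trichotomy x p with hxp | rfl | hpx
  · have hle : (C p - C x) / (p - x) ≤ sInf S := le_csInf hne (hmem x hx hxp)
    have hpx0 : 0 < p - x := by linarith
    rw [div_le_iff₀ hpx0] at hle
    nlinarith [hle]
  · simp
  · have hle : sInf S ≤ (C x - C p) / (x - p) := csInf_le hbdd ⟨x, hpx, rfl⟩
    have hpx0 : 0 < x - p := by linarith
    rw [le_div_iff₀ hpx0] at hle
    linarith

lemma st16K_symm {ρ b : ℝ} (hb : 0 < b) (hb2 : b ^ 2 = 1 - ρ ^ 2) (z u : ℝ) :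
    st16phi z * (b⁻¹ * st16phi ((u - ρ * z) / b))
      = st16phi u * (b⁻¹ * st16phi ((z - ρ * u) / b)) := by
  unfold st16phi
  have e1 : ∀ x y : ℝ, ((Real.sqrt (2*π))⁻¹ * Real.exp x) * (b⁻¹ * ((Real.sqrt (2*π))⁻¹ * Real.exp y))
      = ((Real.sqrt (2*π))⁻¹ * (Real.sqrt (2*π))⁻¹ * b⁻¹) * Real.exp (x + y) := by
    intro x y; rw [Real.exp_add]; ring
  rw [e1, e1]
  have key : -z ^ 2 / 2 + -((u - ρ * z) / b) ^ 2 / 2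
      = -u ^ 2 / 2 + -((z - ρ * u) / b) ^ 2 / 2 := by
    have hbne : b ≠ 0 := hb.ne'
    field_simp
    nlinarith [hb2, sq_nonneg z, sq_nonneg u]
  rw [key]

lemma st16K_bound {ρ b : ℝ} (hb : 0 < b) (hb2 : b ^ 2 = 1 - ρ ^ 2) (z u : ℝ) :
    b⁻¹ * st16phi ((u - ρ * z) / b) ≤ (b⁻¹ * Real.exp (z ^ 2 / 2)) * st16phi u := by
  unfold st16phi
  have hb2' : (0:ℝ) < b ^ 2 := by positivity
  have hw : ((u - ρ * z) / b) ^ 2 * b ^ 2 = (u - ρ * z) ^ 2 := by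
    field_simp
  have h5 : (u ^ 2 - z ^ 2) * b ^ 2 ≤ (u - ρ * z) ^ 2 := by nlinarith [sq_nonneg (ρ * u - z)]
  have hexp : Real.exp (-((u - ρ * z) / b) ^ 2 / 2) ≤ Real.exp (z ^ 2 / 2) * Real.exp (-u ^ 2 / 2) := by
    rw [← Real.exp_add]
    apply Real.exp_le_exp.mpr
    nlinarith [hw, h5, hb2']
  calc b⁻¹ * ((Real.sqrt (2*π))⁻¹ * Real.exp (-((u - ρ * z) / b) ^ 2 / 2))
      ≤ b⁻¹ * ((Real.sqrt (2*π))⁻¹ * (Real.exp (z ^ 2 / 2) * Real.exp (-u ^ 2 / 2))) := by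
        have h0 : (0:ℝ) ≤ b⁻¹ * (Real.sqrt (2*π))⁻¹ := by positivity
        nlinarith [hexp, h0, Real.exp_pos (-((u - ρ * z) / b) ^ 2 / 2)]
    _ = (b⁻¹ * Real.exp (z ^ 2 / 2)) * ((Real.sqrt (2*π))⁻¹ * Real.exp (-u ^ 2 / 2)) := by ring

open MeasureTheory in
lemma st16_step1eq {s : ℝ} (hs : 0 < s) (m₀ : ℝ) (F : ℝ → ℝ) :
    ∫ y : ℝ, s⁻¹ * F ((y - m₀) / s) = ∫ z : ℝ, F z := by
  rw [MeasureTheory.integral_const_mul,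
    integral_sub_right_eq_self (fun x => F (x / s)) m₀,
    MeasureTheory.Measure.integral_comp_div F s,
    abs_of_pos hs, smul_eq_mul, ← mul_assoc, inv_mul_cancel₀ hs.ne', one_mul]

open MeasureTheory in
lemma st16_step1int {s : ℝ} (hs : 0 < s) (m₀ : ℝ) (F : ℝ → ℝ)
    (h : Integrable (fun y => s⁻¹ * F ((y - m₀) / s))) : Integrable F := by
  have h1 : Integrable (fun y => F ((y - m₀) / s)) := by
    have h2 := h.const_mul s
    refine h2.congr ?_
    filter_upwards with y
    rw [← mul_assoc, mul_inv_cancel₀ hs.ne', one_mul]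
  have h2 : Integrable (fun x : ℝ => F (x / s)) := by
    have h3 := h1.comp_add_right m₀
    refine h3.congr ?_
    filter_upwards with y
    simp
  exact (MeasureTheory.integrable_comp_div_iff F hs.ne').mp h2

lemma st16_pointwise (m₀ m₁ : ℝ) {s : ℝ} (hs : 0 < s) (C : ℝ → ℝ) (y : ℝ) :
    (Real.sqrt (2 * π * s^2))⁻¹ * Real.exp (-(y - m₀)^2 / (2 * s^2)) *
      C ((Real.sqrt (2 * π * s^2))⁻¹ * Real.exp (-(y - m₁)^2 / (2 * s^2)) /
        ((Real.sqrt (2 * π * s^2))⁻¹ * Real.exp (-(y - m₀)^2 / (2 * s^2))))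
    = s⁻¹ * (st16phi ((y - m₀) / s) *
        C (Real.exp (((m₁ - m₀) / s) * ((y - m₀) / s) - ((m₁ - m₀) / s)^2 / 2))) := by
  have hsq : Real.sqrt (2 * π * s^2) = Real.sqrt (2 * π) * s := by
    rw [show 2 * π * s^2 = (2 * π) * s^2 by ring, Real.sqrt_mul (by positivity),
      Real.sqrt_sq hs.le]
  have hne : (Real.sqrt (2 * π * s^2))⁻¹ ≠ 0 := by
    rw [hsq]; positivity
  have hratio : (Real.sqrt (2 * π * s^2))⁻¹ * Real.exp (-(y - m₁)^2 / (2 * s^2)) /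
        ((Real.sqrt (2 * π * s^2))⁻¹ * Real.exp (-(y - m₀)^2 / (2 * s^2)))
      = Real.exp (((m₁ - m₀) / s) * ((y - m₀) / s) - ((m₁ - m₀) / s)^2 / 2) := by
    rw [mul_div_mul_left _ _ hne, ← Real.exp_sub]
    congr 1
    field_simp
    ring
  have hden : (Real.sqrt (2 * π * s^2))⁻¹ * Real.exp (-(y - m₀)^2 / (2 * s^2))
      = s⁻¹ * st16phi ((y - m₀) / s) := by
    rw [hsq, mul_inv]
    unfold st16phi
    have hexp : -((y - m₀) / s) ^ 2 / 2 = -(y - m₀)^2 / (2 * s^2) := by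
      rw [div_pow]; ring
    rw [hexp]
    ring
  rw [hratio, hden]
  ring

end St16Aux

open MeasureTheory in
lemma st16_core {C : ℝ → ℝ} (hC : ConvexOn ℝ (Set.Ioi (0:ℝ)) C) {ρ b t t' : ℝ}
    (hb : 0 < b) (hb2 : b ^ 2 = 1 - ρ ^ 2) (htt' : t' = ρ * t)
    (HInt : Integrable (fun u => st16phi u * C (Real.exp (t * u - t^2/2))))
    (H'Int : Integrable (fun z => st16phi z * C (Real.exp (t' * z - t'^2/2)))) :
    ∫ z, st16phi z * C (Real.exp (t' * z - t'^2/2))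
      ≤ ∫ u, st16phi u * C (Real.exp (t * u - t^2/2)) := by
  have hCc : ContinuousOn C (Set.Ioi (0:ℝ)) := ConvexOn.continuousOn isOpen_Ioi hC
  have hcont : ∀ a : ℝ, Continuous (fun u : ℝ => C (Real.exp (a * u - a^2/2))) := by
    intro a
    exact hCc.comp_continuous (by fun_prop) (fun x => Set.mem_Ioi.mpr (Real.exp_pos _))
  -- abbreviations (kept as plain functions to avoid let-unfolding issues)
  obtain ⟨hfun, hhfun⟩ : ∃ g : ℝ → ℝ, ∀ u, g u = C (Real.exp (t * u - t^2/2)) :=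
    ⟨_, fun _ => rfl⟩
  obtain ⟨K, hK⟩ : ∃ K : ℝ → ℝ → ℝ,
      ∀ z u, K z u = st16phi z * (b⁻¹ * st16phi ((u - ρ * z)/b)) := ⟨_, fun _ _ => rfl⟩
  have hKsymm : ∀ z u, K z u = st16phi u * (b⁻¹ * st16phi ((z - ρ * u)/b)) :=
    fun z u => (hK z u).trans (st16K_symm hb hb2 z u)
  have hKnn : ∀ z u, 0 ≤ K z u := by
    intro z u
    rw [hK]
    have h1 := st16phi_nonneg z
    have h2 := st16phi_nonneg ((u - ρ * z)/b)
    positivity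
  have hKker_int : ∀ c : ℝ, Integrable (fun u : ℝ => b⁻¹ * st16phi ((u - c)/b)) := by
    intro c
    have := st16K_integrable hb c 0
    simpa using this
  have hKker_val : ∀ c : ℝ, ∫ u : ℝ, b⁻¹ * st16phi ((u - c)/b) = 1 := by
    intro c
    have := st16K_integral hb c 0
    simpa using this
  have hKint : ∀ z, Integrable (fun u => K z u) := by
    intro z
    refine ((hKker_int (ρ * z)).const_mul (st16phi z)).congr ?_
    filter_upwards with u
    exact (hK z u).symm
  have hKval : ∀ z, ∫ u, K z u = st16phi z := by
    intro z
    simp only [hK]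
    rw [MeasureTheory.integral_const_mul, hKker_val (ρ * z), mul_one]
  have hKexp_int : ∀ z, Integrable (fun u => K z u * Real.exp (t * u - t^2/2)) := by
    intro z
    have h1 := (st16K_integrable hb (ρ * z) t).const_mul (st16phi z * Real.exp (-(t^2/2)))
    refine h1.congr ?_
    filter_upwards with u
    rw [hK, show t * u - t^2/2 = t * u + (-(t^2/2)) by ring, Real.exp_add]
    ring
  have hKexp_val : ∀ z, ∫ u, K z u * Real.exp (t * u - t^2/2)
      = st16phi z * Real.exp (t' * z - t'^2/2) := by
    intro z
    have heq : ∀ u : ℝ, K z u * Real.exp (t * u - t^2/2)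
        = (st16phi z * Real.exp (-(t^2/2))) * (b⁻¹ * st16phi ((u - ρ * z)/b) * Real.exp (t * u)) := by
      intro u
      rw [hK, show t * u - t^2/2 = t * u + (-(t^2/2)) by ring, Real.exp_add]
      ring
    rw [MeasureTheory.integral_congr_ae (Filter.Eventually.of_forall heq),
      MeasureTheory.integral_const_mul, st16K_integral hb (ρ * z) t]
    have hE : Real.exp (-(t^2/2)) * Real.exp (t * (ρ * z) + t^2 * b^2/2)
        = Real.exp (t' * z - t'^2/2) := by
      rw [← Real.exp_add]
      congr 1
      rw [htt']
      linear_combination (t^2/2) * hb2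
    rw [mul_assoc, hE]
  -- integrability of K z · * hfun
  have hKh_cont : ∀ z, Continuous (fun u => K z u * hfun u) := by
    intro z
    simp only [hK, hhfun]
    exact (continuous_const.mul (continuous_const.mul
      (st16phi_cont.comp (by fun_prop)))).mul (hcont t)
  have hKh_int : ∀ z, Integrable (fun u => K z u * hfun u) := by
    intro z
    have hc : (0:ℝ) ≤ st16phi z * (b⁻¹ * Real.exp (z^2/2)) := by
      have h1 := st16phi_nonneg z
      positivity
    refine Integrable.mono
      ((HInt.norm).const_mul (st16phi z * (b⁻¹ * Real.exp (z^2/2))))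
      (hKh_cont z).aestronglyMeasurable ?_
    filter_upwards with u
    have e1 : ‖st16phi u * C (Real.exp (t * u - t^2/2))‖
        = st16phi u * |hfun u| := by
      rw [Real.norm_eq_abs, abs_mul, abs_of_nonneg (st16phi_nonneg u), hhfun]
    have e2 : ‖st16phi z * (b⁻¹ * Real.exp (z^2/2)) * ‖st16phi u * C (Real.exp (t * u - t^2/2))‖‖
        = st16phi z * (b⁻¹ * Real.exp (z^2/2)) * (st16phi u * |hfun u|) := by
      rw [Real.norm_eq_abs (st16phi z * (b⁻¹ * Real.exp (z^2/2)) * _), abs_mul, abs_norm,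
        abs_of_nonneg hc, e1]
    have e3 : ‖K z u * hfun u‖ = K z u * |hfun u| := by
      rw [Real.norm_eq_abs, abs_mul, abs_of_nonneg (hKnn z u)]
    rw [e2, e3]
    have h2 : K z u ≤ st16phi z * (b⁻¹ * Real.exp (z^2/2)) * st16phi u := by
      rw [hK]
      have h3 := st16K_bound hb hb2 z u
      have h4 := st16phi_nonneg z
      nlinarith [h3, h4]
    nlinarith [h2, abs_nonneg (hfun u), st16phi_nonneg u]
  -- Jensen step
  have jz : ∀ z, st16phi z * C (Real.exp (t' * z - t'^2/2)) ≤ ∫ u, K z u * hfun u := by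
    intro z
    obtain ⟨k, hk⟩ := st16_supporting hC (Real.exp_pos (t' * z - t'^2/2))
    set p : ℝ := Real.exp (t' * z - t'^2/2) with hp
    have hle : (fun u => K z u * (C p + k * (Real.exp (t * u - t^2/2) - p)))
        ≤ fun u => K z u * hfun u := by
      intro u
      have h1 := hk (Real.exp (t * u - t^2/2)) (Set.mem_Ioi.mpr (Real.exp_pos _))
      have h0 := hKnn z u
      have h2 : K z u * (C p + k * (Real.exp (t * u - t^2/2) - p))
          ≤ K z u * C (Real.exp (t * u - t^2/2)) := mul_le_mul_of_nonneg_left h1 h0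
      simpa only [hhfun] using h2
    have int1 : Integrable
        (fun u => K z u * (C p + k * (Real.exp (t * u - t^2/2) - p))) := by
      refine (((hKint z).const_mul (C p - k * p)).add ((hKexp_int z).const_mul k)).congr ?_
      filter_upwards with u
      simp only [Pi.add_apply]
      ring
    have hstep := MeasureTheory.integral_mono int1 (hKh_int z) hle
    have hval : ∫ u, K z u * (C p + k * (Real.exp (t * u - t^2/2) - p))
        = st16phi z * C p := by
      have e : ∀ u, K z u * (C p + k * (Real.exp (t * u - t^2/2) - p))
          = (C p - k * p) * K z u + k * (K z u * Real.exp (t * u - t^2/2)) := by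
        intro u; ring
      have i1 : ∫ u, (C p - k * p) * K z u = (C p - k * p) * st16phi z := by
        rw [MeasureTheory.integral_const_mul, hKval z]
      have i2 : ∫ u, k * (K z u * Real.exp (t * u - t^2/2))
          = k * (st16phi z * Real.exp (t' * z - t'^2/2)) := by
        rw [MeasureTheory.integral_const_mul, hKexp_val z]
      rw [MeasureTheory.integral_congr_ae (Filter.Eventually.of_forall e),
        MeasureTheory.integral_add ((hKint z).const_mul _) ((hKexp_int z).const_mul k),
        i1, i2, ← hp]
      ring
    calc st16phi z * C p = ∫ u, K z u * (C p + k * (Real.exp (t * u - t^2/2) - p)) := hval.symm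
      _ ≤ ∫ u, K z u * hfun u := hstep
  -- Fubini
  have contQ : Continuous (fun q : ℝ × ℝ => K q.2 q.1 * hfun q.1) := by
    simp only [hK, hhfun]
    refine Continuous.mul ?_ ((hcont t).comp continuous_fst)
    refine Continuous.mul (st16phi_cont.comp continuous_snd) ?_
    exact continuous_const.mul (st16phi_cont.comp (by fun_prop))
  have IntQ : Integrable (fun q : ℝ × ℝ => K q.2 q.1 * hfun q.1)
      (MeasureTheory.volume.prod MeasureTheory.volume) := by
    rw [MeasureTheory.integrable_prod_iff contQ.aestronglyMeasurable]
    constructor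
    · filter_upwards with u
      have h1 := (hKker_int (ρ * u)).mul_const (st16phi u * hfun u)
      refine h1.congr ?_
      filter_upwards with z
      rw [hKsymm z u]
      ring
    · have e : ∀ u : ℝ, (∫ z, ‖K z u * hfun u‖) = ‖st16phi u * C (Real.exp (t * u - t^2/2))‖ := by
        intro u
        have e2 : ∀ z, ‖K z u * hfun u‖
            = (b⁻¹ * st16phi ((z - ρ * u)/b)) * ‖st16phi u * C (Real.exp (t * u - t^2/2))‖ := by
          intro z
          have hkn : (0:ℝ) ≤ b⁻¹ * st16phi ((z - ρ * u)/b) := by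
            have h1 := st16phi_nonneg ((z - ρ * u)/b)
            positivity
          rw [Real.norm_eq_abs, Real.norm_eq_abs, hKsymm z u,
            show st16phi u * (b⁻¹ * st16phi ((z - ρ * u)/b)) * hfun u
              = (b⁻¹ * st16phi ((z - ρ * u)/b)) * (st16phi u * hfun u) from by ring,
            abs_mul, abs_of_nonneg hkn, hhfun]
        rw [MeasureTheory.integral_congr_ae (Filter.Eventually.of_forall e2),
          MeasureTheory.integral_mul_const, hKker_val (ρ * u), one_mul]
      refine (HInt.norm).congr ?_
      filter_upwards with u
      exact (e u).symm
  have QS : Integrable (fun q : ℝ × ℝ => K q.1 q.2 * hfun q.2)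
      (MeasureTheory.volume.prod MeasureTheory.volume) := IntQ.swap
  have intg : Integrable (fun z => ∫ u, K z u * hfun u) := QS.integral_prod_left
  have swap_eq : ∫ z, ∫ u, K z u * hfun u = ∫ u, ∫ z, K z u * hfun u :=
    MeasureTheory.integral_integral_swap QS
  have inner_eq : ∀ u, ∫ z, K z u * hfun u = st16phi u * hfun u := by
    intro u
    have e2 : ∀ z, K z u * hfun u
        = (b⁻¹ * st16phi ((z - ρ * u)/b)) * (st16phi u * hfun u) := by
      intro z
      rw [hKsymm z u]
      ring
    rw [MeasureTheory.integral_congr_ae (Filter.Eventually.of_forall e2),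
      MeasureTheory.integral_mul_const, hKker_val (ρ * u), one_mul]
  calc ∫ z, st16phi z * C (Real.exp (t' * z - t'^2/2))
      ≤ ∫ z, ∫ u, K z u * hfun u := MeasureTheory.integral_mono H'Int intg jz
    _ = ∫ u, ∫ z, K z u * hfun u := swap_eq
    _ = ∫ u, st16phi u * hfun u :=
        MeasureTheory.integral_congr_ae (Filter.Eventually.of_forall inner_eq)
    _ = ∫ u, st16phi u * C (Real.exp (t * u - t^2/2)) := by
        simp only [hhfun]

/-- increasing the common Gaussian variance cannot increase any
Ali-Silvey (f-)divergence between N(m₀,·) and N(m₁,·). -/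
theorem stmt_16 (σ σ' m₀ m₁ : ℝ) (hσ : 0 < σ) (hσ' : σ < σ') (hm : m₀ ≠ m₁)
    (C : ℝ → ℝ) (hC : ConvexOn ℝ (Set.Ioi (0:ℝ)) C)
    (f : ℝ → ℝ → ℝ → ℝ)
    (hfdef : ∀ m s y, f m s y = (Real.sqrt (2 * π * s^2))⁻¹ *
      Real.exp (-(y - m)^2 / (2 * s^2)))
    (hint : MeasureTheory.Integrable
      (fun y => f m₀ σ y * C (f m₁ σ y / f m₀ σ y)))
    (hint' : MeasureTheory.Integrable
      (fun y => f m₀ σ' y * C (f m₁ σ' y / f m₀ σ' y))) :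
    ∫ y, f m₀ σ' y * C (f m₁ σ' y / f m₀ σ' y) ≤
      ∫ y, f m₀ σ y * C (f m₁ σ y / f m₀ σ y) := by
  have hσ'0 : 0 < σ' := hσ.trans hσ'
  have hptσ : ∀ y : ℝ, f m₀ σ y * C (f m₁ σ y / f m₀ σ y)
      = σ⁻¹ * ((fun z => st16phi z * C (Real.exp (((m₁ - m₀)/σ) * z - ((m₁ - m₀)/σ)^2/2)))
          ((y - m₀)/σ)) := by
    intro y
    simp only [hfdef]
    rw [st16_pointwise m₀ m₁ hσ C y]
  have hptσ' : ∀ y : ℝ, f m₀ σ' y * C (f m₁ σ' y / f m₀ σ' y)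
      = σ'⁻¹ * ((fun z => st16phi z * C (Real.exp (((m₁ - m₀)/σ') * z - ((m₁ - m₀)/σ')^2/2)))
          ((y - m₀)/σ')) := by
    intro y
    simp only [hfdef]
    rw [st16_pointwise m₀ m₁ hσ'0 C y]
  have HInt : MeasureTheory.Integrable
      (fun u => st16phi u * C (Real.exp (((m₁ - m₀)/σ) * u - ((m₁ - m₀)/σ)^2/2))) := by
    refine st16_step1int hσ m₀ _ (hint.congr ?_)
    filter_upwards with y
    exact hptσ y
  have H'Int : MeasureTheory.Integrable
      (fun z => st16phi z * C (Real.exp (((m₁ - m₀)/σ') * z - ((m₁ - m₀)/σ')^2/2))) := by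
    refine st16_step1int hσ'0 m₀ _ (hint'.congr ?_)
    filter_upwards with y
    exact hptσ' y
  have Ieqσ : ∫ y, f m₀ σ y * C (f m₁ σ y / f m₀ σ y)
      = ∫ u, st16phi u * C (Real.exp (((m₁ - m₀)/σ) * u - ((m₁ - m₀)/σ)^2/2)) := by
    rw [MeasureTheory.integral_congr_ae (Filter.Eventually.of_forall hptσ)]
    exact st16_step1eq hσ m₀
      (fun z => st16phi z * C (Real.exp (((m₁ - m₀)/σ) * z - ((m₁ - m₀)/σ)^2/2)))
  have Ieqσ' : ∫ y, f m₀ σ' y * C (f m₁ σ' y / f m₀ σ' y)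
      = ∫ z, st16phi z * C (Real.exp (((m₁ - m₀)/σ') * z - ((m₁ - m₀)/σ')^2/2)) := by
    rw [MeasureTheory.integral_congr_ae (Filter.Eventually.of_forall hptσ')]
    exact st16_step1eq hσ'0 m₀
      (fun z => st16phi z * C (Real.exp (((m₁ - m₀)/σ') * z - ((m₁ - m₀)/σ')^2/2)))
  rw [Ieqσ, Ieqσ']
  have hρ0 : 0 < σ / σ' := div_pos hσ hσ'0
  have hρ1 : σ / σ' < 1 := (div_lt_one hσ'0).mpr hσ'
  have hb : 0 < Real.sqrt (1 - (σ/σ')^2) := Real.sqrt_pos.mpr (by nlinarith)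
  have hb2 : (Real.sqrt (1 - (σ/σ')^2)) ^ 2 = 1 - (σ/σ')^2 := Real.sq_sqrt (by nlinarith)
  have htt' : (m₁ - m₀)/σ' = (σ/σ') * ((m₁ - m₀)/σ) := by
    field_simp
  exact st16_core hC hb hb2 htt' HInt H'Int
end
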